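/- Let N be a semiprime natural number with prime factors p and q, p < q. Let f ∈ ℤ[X], let n be the number of distinct zeros of f modulo p and m the number of distinct zeros of f modulo q. Then ν(f) = mp + nq − 2nm. -/

import Mathlib

/-- `x ∈ Z_N = {0, ..., N−1}` is suitable for `g ∈ ℤ[X]` if `1 < gcd(g(x), N) < N`;
`nu N g` counts the suitable elements. -/
def nu (N : ℕ) (g : Polynomial ℤ) : ℕ :=
  ((Finset.range N).filter
    (fun (x : ℕ) => 1 < Int.gcd (g.eval ((x : ℤ))) (N : ℤ) ∧
      Int.gcd (g.eval ((x : ℤ))) (N : ℤ) < N)).card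

lemma dvd_eval_mod (f : Polynomial ℤ) (p x : ℕ) :
    (p:ℤ) ∣ f.eval (x : ℤ) ↔ (p:ℤ) ∣ f.eval ((x % p : ℕ) : ℤ) := by
  have hd : ((x:ℤ) - ((x % p : ℕ):ℤ)) ∣ (f.eval (x:ℤ) - f.eval ((x % p : ℕ):ℤ)) :=
    Polynomial.sub_dvd_eval_sub _ _ f
  have hp : (p:ℤ) ∣ ((x:ℤ) - ((x % p : ℕ):ℤ)) := ⟨((x / p : ℕ) : ℤ), by
    have h : ((x % p : ℕ) : ℤ) + (p : ℤ) * ((x / p : ℕ) : ℤ) = (x : ℤ) := by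
      exact_mod_cast Nat.mod_add_div x p
    linarith⟩
  have h2 : (p:ℤ) ∣ (f.eval (x:ℤ) - f.eval ((x % p : ℕ):ℤ)) := hp.trans hd
  constructor
  · intro h
    have := dvd_sub h h2
    simpa using this
  · intro h
    have := dvd_add h2 h
    simpa using this

lemma crt_count (p q : ℕ) (hp : 0 < p) (hq : 0 < q) (hco : Nat.Coprime p q)
    (A B : ℕ → Prop) [DecidablePred A] [DecidablePred B]
    (hA : ∀ x, A x ↔ A (x % p)) (hB : ∀ x, B x ↔ B (x % q)) :
    ((Finset.range (p*q)).filter (fun x => A x ∧ B x)).card =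
      ((Finset.range p).filter A).card * ((Finset.range q).filter B).card := by
  rw [← Finset.card_product]
  apply Finset.card_bij (fun x _ => (x % p, x % q))
  · intro x hx
    simp only [Finset.mem_filter, Finset.mem_range] at hx
    refine Finset.mem_product.mpr ⟨Finset.mem_filter.mpr ⟨Finset.mem_range.mpr (Nat.mod_lt _ hp),
      (hA x).mp hx.2.1⟩, Finset.mem_filter.mpr ⟨Finset.mem_range.mpr (Nat.mod_lt _ hq),
      (hB x).mp hx.2.2⟩⟩
  · intro x hx y hy hxy
    simp only [Finset.mem_filter, Finset.mem_range] at hx hy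
    have h1 : x % p = y % p := congrArg Prod.fst hxy
    have h2 : x % q = y % q := congrArg Prod.snd hxy
    have h3 := (Nat.modEq_and_modEq_iff_modEq_mul hco).mp ⟨h1, h2⟩
    unfold Nat.ModEq at h3
    rwa [Nat.mod_eq_of_lt hx.1, Nat.mod_eq_of_lt hy.1] at h3
  · rintro ⟨i, j⟩ hij
    rw [Finset.mem_product] at hij
    simp only [Finset.mem_filter, Finset.mem_range] at hij
    obtain ⟨k, hk1, hk2⟩ := Nat.chineseRemainder hco i j
    have hpq : 0 < p * q := Nat.mul_pos hp hq
    have hdp : p ∣ p * q := ⟨q, rfl⟩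
    have hdq : q ∣ p * q := ⟨p, Nat.mul_comm p q⟩
    have e1 : k % (p*q) % p = i := by
      rw [Nat.mod_mod_of_dvd k hdp]
      have h := hk1
      unfold Nat.ModEq at h
      rw [h, Nat.mod_eq_of_lt hij.1.1]
    have e2 : k % (p*q) % q = j := by
      rw [Nat.mod_mod_of_dvd k hdq]
      have h := hk2
      unfold Nat.ModEq at h
      rw [h, Nat.mod_eq_of_lt hij.2.1]
    refine ⟨k % (p*q), Finset.mem_filter.mpr ⟨Finset.mem_range.mpr (Nat.mod_lt _ hpq),
      ?_, ?_⟩, ?_⟩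
    · rw [hA (k % (p*q)), e1]; exact hij.1.2
    · rw [hB (k % (p*q)), e2]; exact hij.2.2
    · rw [e1, e2]

lemma gcd_semiprime (p q : ℕ) (hp : p.Prime) (hq : q.Prime) (hne : p ≠ q) (a : ℤ) :
    (1 < Int.gcd a ((p*q : ℕ):ℤ) ∧ Int.gcd a ((p*q : ℕ):ℤ) < p*q) ↔
      (((p:ℤ) ∣ a ∧ ¬ (q:ℤ) ∣ a) ∨ (¬ (p:ℤ) ∣ a ∧ (q:ℤ) ∣ a)) := by
  have hco : Nat.Coprime p q := (Nat.coprime_primes hp hq).mpr hne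
  set g := Int.gcd a ((p*q : ℕ):ℤ) with hg
  have hgdvd : g ∣ p * q := by
    have h := Int.gcd_dvd_right (a := a) (b := ((p*q : ℕ):ℤ))
    exact_mod_cast h
  have hg0 : g ≠ 0 := by
    intro h
    have := Int.gcd_eq_zero_iff.mp h
    have : ((p*q : ℕ):ℤ) = 0 := this.2
    have h0 : p * q = 0 := by exact_mod_cast this
    exact absurd h0 (Nat.mul_pos hp.pos hq.pos).ne'
  have hpg : p ∣ g ↔ (p:ℤ) ∣ a := by
    constructor
    · intro h
      exact (Int.natCast_dvd_natCast.mpr h).trans (Int.gcd_dvd_left _ _)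
    · intro h
      have h2 : (p:ℤ) ∣ ((p*q : ℕ):ℤ) := by
        push_cast
        exact Dvd.intro q rfl
      have := Int.dvd_gcd h h2
      exact_mod_cast this
  have hqg : q ∣ g ↔ (q:ℤ) ∣ a := by
    constructor
    · intro h
      exact (Int.natCast_dvd_natCast.mpr h).trans (Int.gcd_dvd_left _ _)
    · intro h
      have h2 : (q:ℤ) ∣ ((p*q : ℕ):ℤ) := by
        push_cast
        exact Dvd.intro_left p rfl
      have := Int.dvd_gcd h h2
      exact_mod_cast this
  constructor
  · rintro ⟨h1, h2⟩
    have hnotboth : ¬ ((p:ℤ) ∣ a ∧ (q:ℤ) ∣ a) := by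
      rintro ⟨ha, hb⟩
      have hpd : p ∣ g := hpg.mpr ha
      have hqd : q ∣ g := hqg.mpr hb
      have hd : p * q ∣ g := hco.mul_dvd_of_dvd_of_dvd hpd hqd
      have := Nat.le_of_dvd (Nat.pos_of_ne_zero hg0) hd
      omega
    have hone : (p:ℤ) ∣ a ∨ (q:ℤ) ∣ a := by
      obtain ⟨r, hr, hrg⟩ := Nat.exists_prime_and_dvd (by omega : g ≠ 1)
      have hrpq : r ∣ p * q := hrg.trans hgdvd
      rcases (Nat.Prime.dvd_mul hr).mp hrpq with h | h
      · left
        have : r = p := (Nat.prime_dvd_prime_iff_eq hr hp).mp h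
        subst this
        exact hpg.mp hrg
      · right
        have : r = q := (Nat.prime_dvd_prime_iff_eq hr hq).mp h
        subst this
        exact hqg.mp hrg
    tauto
  · have key : ∀ (u v : ℕ), u.Prime → v.Prime → Nat.Coprime v u → g ∣ u * v →
        (u ∣ g) → ¬ (v ∣ g) → 1 < g ∧ g < u * v := by
      intro u v hu hv hcouv hgd hud hvd
      constructor
      · have := Nat.le_of_dvd (Nat.pos_of_ne_zero hg0) hud
        have := hu.two_le
        omega
      · have hcogv : Nat.Coprime g v := ((hv.coprime_iff_not_dvd).mpr hvd).symm
        have : g ∣ u := hcogv.dvd_of_dvd_mul_right hgd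
        have := Nat.le_of_dvd hu.pos this
        have := hv.two_le
        have := hu.pos
        nlinarith
    rintro (⟨h1, h2⟩ | ⟨h1, h2⟩)
    · exact key p q hp hq hco.symm hgdvd (hpg.mpr h1) (fun h => h2 (hqg.mp h))
    · have := key q p hq hp hco (by rwa [Nat.mul_comm] at hgdvd) (hqg.mpr h2)
        (fun h => h1 (hpg.mp h))
      exact ⟨this.1, by rw [Nat.mul_comm q p] at this; exact this.2⟩

theorem nu_eq_of_semiprime (N p q : ℕ) (hp : p.Prime) (hq : q.Prime) (hpq : p < q)
    (hN : N = p * q) (f : Polynomial ℤ) (n m : ℕ)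
    (hn : n = ((Finset.range p).filter (fun (x : ℕ) => (p : ℤ) ∣ f.eval ((x : ℤ)))).card)
    (hm : m = ((Finset.range q).filter (fun (x : ℕ) => (q : ℤ) ∣ f.eval ((x : ℤ)))).card) :
    (nu N f : ℤ) = m * p + n * q - 2 * n * m := by
  classical
  subst hN
  have hne : p ≠ q := ne_of_lt hpq
  have hco : Nat.Coprime p q := (Nat.coprime_primes hp hq).mpr hne
  -- rewrite nu as count of xor condition
  have step1 : nu (p*q) f = ((Finset.range (p*q)).filter
      (fun (x:ℕ) => ((p:ℤ) ∣ f.eval (x:ℤ) ∧ ¬ (q:ℤ) ∣ f.eval (x:ℤ)) ∨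
        (¬ (p:ℤ) ∣ f.eval (x:ℤ) ∧ (q:ℤ) ∣ f.eval (x:ℤ)))).card := by
    unfold nu
    congr 1
    apply Finset.filter_congr
    intro x _
    exact_mod_cast gcd_semiprime p q hp hq hne (f.eval (x:ℤ))
  have hdisj : Disjoint
      ((Finset.range (p*q)).filter (fun (x:ℕ) => (p:ℤ) ∣ f.eval (x:ℤ) ∧ ¬ (q:ℤ) ∣ f.eval (x:ℤ)))
      ((Finset.range (p*q)).filter (fun (x:ℕ) => ¬ (p:ℤ) ∣ f.eval (x:ℤ) ∧ (q:ℤ) ∣ f.eval (x:ℤ))) := by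
    apply Finset.disjoint_filter_filter'
    rw [disjoint_iff_inf_le]
    intro x hx
    simp only [Pi.inf_apply, inf_Prop_eq] at hx
    exact absurd hx.1.1 hx.2.1
  have step2 : nu (p*q) f =
      ((Finset.range (p*q)).filter (fun (x:ℕ) => (p:ℤ) ∣ f.eval (x:ℤ) ∧ ¬ (q:ℤ) ∣ f.eval (x:ℤ))).card +
      ((Finset.range (p*q)).filter (fun (x:ℕ) => ¬ (p:ℤ) ∣ f.eval (x:ℤ) ∧ (q:ℤ) ∣ f.eval (x:ℤ))).card := by
    rw [step1, Finset.filter_or, Finset.card_union_of_disjoint hdisj]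
  have c1 : ((Finset.range (p*q)).filter
      (fun (x:ℕ) => (p:ℤ) ∣ f.eval (x:ℤ) ∧ ¬ (q:ℤ) ∣ f.eval (x:ℤ))).card =
      ((Finset.range p).filter (fun (x:ℕ) => (p:ℤ) ∣ f.eval (x:ℤ))).card *
      ((Finset.range q).filter (fun (x:ℕ) => ¬ (q:ℤ) ∣ f.eval (x:ℤ))).card :=
    crt_count p q hp.pos hq.pos hco _ _ (fun x => dvd_eval_mod f p x)
      (fun x => not_congr (dvd_eval_mod f q x))
  have c2 : ((Finset.range (p*q)).filter
      (fun (x:ℕ) => ¬ (p:ℤ) ∣ f.eval (x:ℤ) ∧ (q:ℤ) ∣ f.eval (x:ℤ))).card =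
      ((Finset.range p).filter (fun (x:ℕ) => ¬ (p:ℤ) ∣ f.eval (x:ℤ))).card *
      ((Finset.range q).filter (fun (x:ℕ) => (q:ℤ) ∣ f.eval (x:ℤ))).card :=
    crt_count p q hp.pos hq.pos hco _ _ (fun x => not_congr (dvd_eval_mod f p x))
      (fun x => dvd_eval_mod f q x)
  have hq' : ((Finset.range q).filter (fun (x:ℕ) => ¬ (q:ℤ) ∣ f.eval (x:ℤ))).card = q - m := by
    have := Finset.card_filter_add_card_filter_not
      (s := Finset.range q) (p := fun (x:ℕ) => (q:ℤ) ∣ f.eval (x:ℤ))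
    rw [Finset.card_range] at this
    omega
  have hp' : ((Finset.range p).filter (fun (x:ℕ) => ¬ (p:ℤ) ∣ f.eval (x:ℤ))).card = p - n := by
    have := Finset.card_filter_add_card_filter_not
      (s := Finset.range p) (p := fun (x:ℕ) => (p:ℤ) ∣ f.eval (x:ℤ))
    rw [Finset.card_range] at this
    omega
  have hmq : m ≤ q := by
    rw [hm]
    calc ((Finset.range q).filter _).card ≤ (Finset.range q).card := Finset.card_filter_le _ _
    _ = q := Finset.card_range q
  have hnp : n ≤ p := by
    rw [hn]
    calc ((Finset.range p).filter _).card ≤ (Finset.range p).card := Finset.card_filter_le _ _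
    _ = p := Finset.card_range p
  rw [step2, c1, c2, hq', hp', ← hn, ← hm]
  push_cast [Nat.cast_sub hmq, Nat.cast_sub hnp]
  ring
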